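/- The sequence a_j = (3j)!/(j!·(2j+1)!) satisfies a₀ = 1, a₁ = 1, a₂ = 3, a₃ = 12, a₄ = 55, a₅ = 273, a₆ = 1428, and each a_j is a positive integer. -/
import Mathlib


def a (j : ℕ) : ℕ := (3 * j).factorial / (j.factorial * (2 * j + 1).factorial)

lemma key (j : ℕ) : (2 * j + 1) ∣ (3 * j).choose j := by
  have h1 : (3 * j + 1) * (3 * j).choose j = (3 * j + 1).choose (j + 1) * (j + 1) := by
    have := Nat.add_one_mul_choose_eq (3 * j) j
    simpa [Nat.succ_eq_add_one] using this
  have h2 : (3 * j + 1).choose (j + 1) * (j + 1) = (3 * j + 1).choose j * (3 * j + 1 - j) := by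
    exact Nat.choose_succ_right_eq (3 * j + 1) j
  have h3 : (3 * j + 1) * (3 * j).choose j = (3 * j + 1).choose j * (2 * j + 1) := by
    rw [h1, h2]; congr 1; omega
  have hcop : Nat.Coprime (2 * j + 1) (3 * j + 1) := by
    have h4 : 3 * j + 1 = j + (2 * j + 1) * 1 := by ring
    rw [h4, Nat.coprime_add_mul_left_right]
    have h5 : 2 * j + 1 = 1 + j * 2 := by ring
    rw [h5, Nat.coprime_add_mul_left_left]
    exact Nat.coprime_one_left j
  have hdvd : (2 * j + 1) ∣ (3 * j + 1) * (3 * j).choose j := ⟨(3 * j + 1).choose j, by linarith [h3]⟩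
  exact (Nat.Coprime.dvd_of_dvd_mul_left hcop hdvd)

lemma dvd_main (j : ℕ) : j.factorial * (2 * j + 1).factorial ∣ (3 * j).factorial := by
  obtain ⟨c, hc⟩ := key j
  have hle : j ≤ 3 * j := by omega
  have h := Nat.choose_mul_factorial_mul_factorial hle
  have h3 : 3 * j - j = 2 * j := by omega
  rw [h3] at h
  refine ⟨c, ?_⟩
  rw [← h, hc]
  rw [Nat.factorial_succ]
  ring

theorem stmt_12 :
    a 0 = 1 ∧ a 1 = 1 ∧ a 2 = 3 ∧ a 3 = 12 ∧ a 4 = 55 ∧ a 5 = 273 ∧ a 6 = 1428 ∧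
      (∀ j, j.factorial * (2 * j + 1).factorial ∣ (3 * j).factorial) ∧
      (∀ j, 0 < a j) := by
  refine ⟨by norm_num [a, Nat.factorial], by norm_num [a, Nat.factorial],
    by norm_num [a, Nat.factorial], by norm_num [a, Nat.factorial],
    by norm_num [a, Nat.factorial], by norm_num [a, Nat.factorial],
    by norm_num [a, Nat.factorial], dvd_main, ?_⟩
  intro j
  have hd := dvd_main j
  have hpos : 0 < j.factorial * (2 * j + 1).factorial :=
    Nat.mul_pos (Nat.factorial_pos _) (Nat.factorial_pos _)
  exact Nat.div_pos (Nat.le_of_dvd (Nat.factorial_pos _) hd) hpos
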